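/- Let C ⊆ F_q^n be a proper linear code and m ≥ 2, and let ρ := ρ(C,…,C) (m times) be the product-expansion constant. Assume: (a) ρ(C, C) ≥ ρ and δ(C) ≥ ρ; (b) the agreement testability of C^{⊗2} satisfies ρ_a(C^{⊗2}) ≥ ρ(C, C); (c) ρ_r(T_2^1, C^{⊗2}) ≥ ρ_a(C^{⊗2})/(2(1 + ρ_a(C^{⊗2}))); (d) the axis-parallel hyperplane test bound ρ_r(T_k^{k−1}, C^{⊗k}) ≥ (1/12)·δ(C)^k for all 3 ≤ k ≤ m. Then ρ_r(T_m^1, C^{⊗m}) ≥ (1/(4·12^{m−2}))·ρ^{(1/2)(m−2)(m+3)+1}. -/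

import Mathlib

noncomputable section

open Polynomial

/-- Normalized Hamming weight. -/
def normWt {ι F : Type*} [Fintype ι] [Zero F] (x : ι → F) : ℝ :=
  (Nat.card {p : ι // x p ≠ 0} : ℝ) / (Fintype.card ι : ℝ)

/-- Normalized Hamming distance from a word to a set of words. -/
def distTo {ι F : Type*} [Fintype ι] [AddGroup F] (x : ι → F) (S : Set (ι → F)) : ℝ :=
  sInf ((fun c => normWt (x - c)) '' S)

/-- Normalized minimum distance of a code. -/
def minDist {ι F : Type*} [Fintype ι] [Zero F] (S : Set (ι → F)) : ℝ :=
  sInf (normWt '' (S \ {0}))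

/-- Restriction of a word on a grid to the axis-`i` line through `y`. -/
def lineRestrict {F : Type*} {m : ℕ} {n : Fin m → ℕ}
    (x : (∀ j, Fin (n j)) → F) (i : Fin m) (y : ∀ j, Fin (n j)) : Fin (n i) → F :=
  fun s => x (Function.update y i s)

/-- `‖x‖_i`: the fraction of axis-`i` parallel lines on which `x` is nonzero. -/
def lineWt {F : Type*} [Zero F] {m : ℕ} {n : Fin m → ℕ}
    (x : (∀ j, Fin (n j)) → F) (i : Fin m) : ℝ :=
  (Nat.card {y : ∀ j, Fin (n j) // lineRestrict x i y ≠ 0} : ℝ) /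
    (Fintype.card (∀ j, Fin (n j)) : ℝ)

/-- `C^{(i)}`: words all of whose axis-`i` lines belong to `C i`. -/
def axisCode {F : Type*} {m : ℕ} {n : Fin m → ℕ}
    (C : ∀ i, Set (Fin (n i) → F)) (i : Fin m) : Set ((∀ j, Fin (n j)) → F) :=
  {x | ∀ y, lineRestrict x i y ∈ C i}

/-- Tensor product code `C₁ ⊗ ⋯ ⊗ C_m`. -/
def prodCode {F : Type*} {m : ℕ} {n : Fin m → ℕ}
    (C : ∀ i, Set (Fin (n i) → F)) : Set ((∀ j, Fin (n j)) → F) :=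
  ⋂ i, axisCode C i

/-- Dual code w.r.t. the standard bilinear form. -/
def dualCode {ι F : Type*} [Fintype ι] [CommRing F] (S : Set (ι → F)) : Set (ι → F) :=
  {x | ∀ c ∈ S, ∑ p, x p * c p = 0}

/-- `C₁ ⊞ ⋯ ⊞ C_m := (C₁^⊥ ⊗ ⋯ ⊗ C_m^⊥)^⊥`. -/
def boxCode {F : Type*} [CommRing F] {m : ℕ} {n : Fin m → ℕ}
    (C : ∀ i, Set (Fin (n i) → F)) : Set ((∀ j, Fin (n j)) → F) :=
  dualCode (prodCode (fun i => dualCode (C i)))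

/-- `ρ`-product-expansion of a collection of codes. -/
def productExpanding {F : Type*} [Field F] {m : ℕ} {n : Fin m → ℕ}
    (C : ∀ i, Set (Fin (n i) → F)) (ρ : ℝ) : Prop :=
  ∀ c ∈ boxCode C, ∃ a : Fin m → ((∀ j, Fin (n j)) → F),
    (∀ i, a i ∈ axisCode C i) ∧ c = ∑ i, a i ∧
      ρ * ∑ i, lineWt (a i) i ≤ normWt c

/-- The product-expansion constant `ρ(𝒞)`. -/
def prodExpConst {F : Type*} [Field F] {m : ℕ} {n : Fin m → ℕ}
    (C : ∀ i, Set (Fin (n i) → F)) : ℝ :=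
  sSup {ρ : ℝ | productExpanding C ρ}

/-- Expected distance under the axis-parallel line test `T_m^1`. -/
def lineTestE {F : Type*} [Field F] {m : ℕ} {n : Fin m → ℕ}
    (C : ∀ i, Set (Fin (n i) → F)) (x : (∀ j, Fin (n j)) → F) : ℝ :=
  (∑ i, (∑ y : ∀ j, Fin (n j), distTo (lineRestrict x i y) (C i)) /
      (Fintype.card (∀ j, Fin (n j)) : ℝ)) / (m : ℝ)

/-- Robustness constant `ρ_r(T_m^1, ⊗𝒞)` of the axis-parallel line test. -/
def lineRobustConst {F : Type*} [Field F] {m : ℕ} {n : Fin m → ℕ}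
    (C : ∀ i, Set (Fin (n i) → F)) : ℝ :=
  sSup {α : ℝ | ∀ x, α * distTo x (prodCode C) ≤ lineTestE C x}

/-- Agreement-testability constant `ρ_a(⊗𝒞)`. -/
def agreeConst {F : Type*} [Field F] {m : ℕ} {n : Fin m → ℕ}
    (C : ∀ i, Set (Fin (n i) → F)) : ℝ :=
  sSup {α : ℝ | ∀ c : Fin m → ((∀ j, Fin (n j)) → F),
    (∀ i, c i ∈ axisCode C i) → ∃ z ∈ prodCode C,
      α * ((∑ i, lineWt (c i - z) i) / (m : ℝ)) ≤
        (∑ i, ∑ j, normWt (c i - c j)) / ((m : ℝ) ^ 2)}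

/-- `C^{⊗k}` on the grid `[n]^k`. -/
def tensorPow {F : Type*} {n : ℕ} (C : Set (Fin n → F)) (k : ℕ) :
    Set ((Fin k → Fin n) → F) :=
  {x | ∀ (i : Fin k) (y : Fin k → Fin n), (fun s => x (Function.update y i s)) ∈ C}

/-- Restriction of a word to the axis-parallel `k`-flat determined by the axes
`e : Fin k ↪ Fin m` and base point `y`. -/
def flatRestrict {F : Type*} {n m k : ℕ} (x : (Fin m → Fin n) → F)
    (e : Fin k ↪ Fin m) (y : Fin m → Fin n) : (Fin k → Fin n) → F :=
  fun z => x (fun j => if h : ∃ l, e l = j then z h.choose else y j)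

/-- Expected distance under the axis-parallel `k`-flat test `T_m^k` for `C^{⊗m}`. -/
def flatTestE {F : Type*} [Field F] {n : ℕ} (C : Set (Fin n → F)) (m k : ℕ)
    (x : (Fin m → Fin n) → F) : ℝ :=
  (∑ e : Fin k ↪ Fin m, ∑ y : Fin m → Fin n,
      distTo (flatRestrict x e y) (tensorPow C k)) /
    ((Fintype.card (Fin k ↪ Fin m) : ℝ) * (Fintype.card (Fin m → Fin n) : ℝ))

/-- Robustness constant `ρ_r(T_m^k, C^{⊗m})`. -/
def flatRobustConst {F : Type*} [Field F] {n : ℕ} (C : Set (Fin n → F)) (m k : ℕ) : ℝ :=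
  sSup {α : ℝ | ∀ x : (Fin m → Fin n) → F,
    α * distTo x (tensorPow C m) ≤ flatTestE C m k x}

/-- The polynomial `Σ aᵢ xⁱ` of a word of length `n`. -/
def wordPoly {F : Type*} [CommSemiring F] {n : ℕ} (a : Fin n → F) : Polynomial F :=
  ∑ i, Polynomial.C (a i) * Polynomial.X ^ (i : ℕ)

/-- The cyclic code of length `n` with check polynomial `p`. -/
def cyclicCode {F : Type*} [CommRing F] (n : ℕ) (p : Polynomial F) : Set (Fin n → F) :=
  {a | (Polynomial.X ^ n - 1) ∣ p * wordPoly a}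

/-- Check polynomial `(x-1)(x-ω)⋯(x-ω^{k-1})` of the primitive Reed–Solomon code. -/
def rsCheck {F : Type*} [CommRing F] (k : ℕ) (ω : F) : Polynomial F :=
  ∏ i ∈ Finset.range k, (Polynomial.X - Polynomial.C (ω ^ i))

/-- The primitive Reed–Solomon evaluation code of degree `< k` at the nonzero points. -/
def evalRS (F : Type*) [Field F] [Fintype F] (k : ℕ) : Set (Fˣ → F) :=
  {c | ∃ p : Polynomial F, p.degree < (k : ℕ) ∧ ∀ a : Fˣ, c a = p.eval (a : F)}

/-- Words on `ι₁ × ι₂` all of whose columns lie in `S`. -/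
def colCode {ι₁ ι₂ F : Type*} (S : Set (ι₁ → F)) : Set (ι₁ × ι₂ → F) :=
  {x | ∀ j, (fun i => x (i, j)) ∈ S}

/-- Words on `ι₁ × ι₂` all of whose rows lie in `S`. -/
def rowCode {ι₁ ι₂ F : Type*} (S : Set (ι₂ → F)) : Set (ι₁ × ι₂ → F) :=
  {x | ∀ i, (fun j => x (i, j)) ∈ S}

/-- The multivariate polynomial `Σ_y x_y ∏ᵢ Xᵢ^{yᵢ}` of a word on the grid `[n]^m`. -/
def wordPolyMv {F : Type*} [CommSemiring F] {m n : ℕ} (x : (Fin m → Fin n) → F) :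
    MvPolynomial (Fin m) F :=
  ∑ y : Fin m → Fin n, MvPolynomial.C (x y) * ∏ i, MvPolynomial.X i ^ ((y i : ℕ))

lemma normWt_nonneg {ι F : Type*} [Fintype ι] [Zero F] (x : ι → F) : 0 ≤ normWt x := by
  unfold normWt; positivity

lemma normWt_le_one {ι F : Type*} [Fintype ι] [Zero F] (x : ι → F) : normWt x ≤ 1 := by
  unfold normWt
  rcases Nat.eq_zero_or_pos (Fintype.card ι) with h | h
  · simp [h]
  · rw [div_le_one (by exact_mod_cast h)]
    calc (Nat.card {p : ι // x p ≠ 0} : ℝ) ≤ (Nat.card ι : ℝ) := by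
          exact_mod_cast Nat.card_le_card_of_injective (Subtype.val : {p : ι // x p ≠ 0} → ι)
            Subtype.val_injective
      _ = (Fintype.card ι : ℝ) := by rw [Nat.card_eq_fintype_card]

lemma one_div_card_le_normWt {ι F : Type*} [Fintype ι] [Zero F] {x : ι → F} (hx : x ≠ 0) :
    1 / (Fintype.card ι : ℝ) ≤ normWt x := by
  have hne : Nonempty {p : ι // x p ≠ 0} := by
    by_contra h
    apply hx
    funext p
    by_contra hp
    exact h ⟨⟨p, hp⟩⟩
  have h1 : 1 ≤ Nat.card {p : ι // x p ≠ 0} := Nat.one_le_iff_ne_zero.2 (Nat.card_ne_zero.mpr ⟨hne, inferInstance⟩)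
  have hcard : 0 < Fintype.card ι := Fintype.card_pos_iff.2 ⟨(Classical.arbitrary {p // x p ≠ 0}).1⟩
  unfold normWt
  apply div_le_div_of_nonneg_right ?_ ?_ |>.trans_eq rfl
  · exact_mod_cast h1
  · have : (0:ℝ) < Fintype.card ι := by exact_mod_cast hcard
    linarith

lemma distTo_nonneg {ι F : Type*} [Fintype ι] [AddGroup F] (x : ι → F) (S : Set (ι → F)) :
    0 ≤ distTo x S := by
  apply Real.sInf_nonneg
  rintro v ⟨c, _, rfl⟩
  exact normWt_nonneg _
section robust
variable {F : Type*} [Field F] {n : ℕ}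

lemma flatTestE_nonneg (C : Set (Fin n → F)) (m k : ℕ) (x : (Fin m → Fin n) → F) :
    0 ≤ flatTestE C m k x := by
  unfold flatTestE
  apply div_nonneg
  · apply Finset.sum_nonneg; intro e _
    apply Finset.sum_nonneg; intro y _
    exact distTo_nonneg _ _
  · positivity

lemma zero_mem_tensorPow {C : Set (Fin n → F)} (h0 : (0 : Fin n → F) ∈ C) (k : ℕ) :
    (0 : (Fin k → Fin n) → F) ∈ tensorPow C k := by
  intro i y
  exact h0

/-- distance to a set containing x-far elements is at least 1/card when x ∉ S. -/
lemma le_distTo_of_not_mem {k : ℕ} {S : Set ((Fin k → Fin n) → F)} (hS : S.Nonempty)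
    {x : (Fin k → Fin n) → F} (hx : x ∉ S) :
    1 / (Fintype.card (Fin k → Fin n) : ℝ) ≤ distTo x S := by
  apply le_csInf (hS.image _)
  rintro v ⟨c, hc, rfl⟩
  apply one_div_card_le_normWt
  intro h
  apply hx
  have : x = c := by rwa [sub_eq_zero] at h
  rwa [this]
end robust
section robust2
variable {F : Type*} [Field F] {n : ℕ}

/-- Existence of a word at positive distance from the tensor code. -/
lemma exists_distTo_pos {C : Set (Fin n → F)} (h0 : (0 : Fin n → F) ∈ C)
    {w : Fin n → F} (hw : w ∉ C) (hn : 0 < n) {k : ℕ} (hk : 1 ≤ k) :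
    ∃ x : (Fin k → Fin n) → F, 0 < distTo x (tensorPow C k) := by
  have hk' : 0 < k := hk
  refine ⟨fun z => w (z ⟨0, hk'⟩), ?_⟩
  have hxmem : (fun z : Fin k → Fin n => w (z ⟨0, hk'⟩)) ∉ tensorPow C k := by
    intro hmem
    have := hmem ⟨0, hk'⟩ (fun _ => ⟨0, hn⟩)
    simp only [Function.update_self] at this
    exact hw this
  have hpos : (0:ℝ) < 1 / (Fintype.card (Fin k → Fin n) : ℝ) := by
    have : (0:ℕ) < Fintype.card (Fin k → Fin n) := by
      simp [Fintype.card_fun]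
      positivity
    positivity
  exact lt_of_lt_of_le hpos (le_distTo_of_not_mem ⟨0, zero_mem_tensorPow h0 k⟩ hxmem)

lemma robust_set_nonempty (C : Set (Fin n → F)) (m k : ℕ) :
    (0:ℝ) ∈ {α : ℝ | ∀ x : (Fin m → Fin n) → F,
      α * distTo x (tensorPow C m) ≤ flatTestE C m k x} := by
  intro x
  rw [zero_mul]
  exact flatTestE_nonneg _ _ _ _

lemma robust_set_bddAbove {C : Set (Fin n → F)} {m : ℕ} (k : ℕ)
    (hw : ∃ x : (Fin m → Fin n) → F, 0 < distTo x (tensorPow C m)) :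
    BddAbove {α : ℝ | ∀ x : (Fin m → Fin n) → F,
      α * distTo x (tensorPow C m) ≤ flatTestE C m k x} := by
  obtain ⟨x₀, hx₀⟩ := hw
  refine ⟨flatTestE C m k x₀ / distTo x₀ (tensorPow C m), ?_⟩
  intro α hα
  exact (le_div_iff₀ hx₀).2 (hα x₀)

lemma flatRobustConst_nonneg {C : Set (Fin n → F)} {m : ℕ} (k : ℕ)
    (hw : ∃ x : (Fin m → Fin n) → F, 0 < distTo x (tensorPow C m)) :
    0 ≤ flatRobustConst C m k :=
  le_csSup (robust_set_bddAbove k hw) (robust_set_nonempty C m k)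

lemma le_flatRobustConst {C : Set (Fin n → F)} {m : ℕ} (k : ℕ)
    (hw : ∃ x : (Fin m → Fin n) → F, 0 < distTo x (tensorPow C m)) {α : ℝ}
    (hα : ∀ x : (Fin m → Fin n) → F,
      α * distTo x (tensorPow C m) ≤ flatTestE C m k x) :
    α ≤ flatRobustConst C m k :=
  le_csSup (robust_set_bddAbove k hw) hα

lemma flatRobustConst_spec {C : Set (Fin n → F)} {m : ℕ} (k : ℕ)
    (hw : ∃ x : (Fin m → Fin n) → F, 0 < distTo x (tensorPow C m))
    (x : (Fin m → Fin n) → F) :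
    flatRobustConst C m k * distTo x (tensorPow C m) ≤ flatTestE C m k x := by
  rcases eq_or_lt_of_le (distTo_nonneg x (tensorPow C m)) with h | h
  · rw [← h, mul_zero]
    exact flatTestE_nonneg _ _ _ _
  · have hub : flatRobustConst C m k ≤ flatTestE C m k x / distTo x (tensorPow C m) := by
      apply csSup_le ⟨0, robust_set_nonempty C m k⟩
      intro α hα
      exact (le_div_iff₀ h).2 (hα x)
    calc flatRobustConst C m k * distTo x (tensorPow C m)
        ≤ (flatTestE C m k x / distTo x (tensorPow C m)) * distTo x (tensorPow C m) :=
          mul_le_mul_of_nonneg_right hub h.le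
      _ = flatTestE C m k x := div_mul_cancel₀ _ h.ne'
end robust2
section comb
variable {F : Type*} [Field F] {n : ℕ}

/-- merging a base point with values on a flat -/
def mergePt {n K a : ℕ} (e' : Fin a ↪ Fin K) (y : Fin K → Fin n) (z : Fin a → Fin n) :
    Fin K → Fin n :=
  fun i => if h : ∃ l, e' l = i then z h.choose else y i

lemma flatRestrict_flatRestrict {K a j : ℕ} (x : (Fin K → Fin n) → F)
    (e' : Fin a ↪ Fin K) (f : Fin j ↪ Fin a) (y : Fin K → Fin n) (z : Fin a → Fin n) :
    flatRestrict (flatRestrict x e' y) f z =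
      flatRestrict x (f.trans e') (mergePt e' y z) := by
  funext w
  show x _ = x _
  congr 1
  funext i
  by_cases h1 : ∃ l, e' l = i
  · rw [dif_pos h1]
    beta_reduce
    have hch : e' h1.choose = i := h1.choose_spec
    by_cases h2 : ∃ t, f t = h1.choose
    · rw [dif_pos h2]
      have h3 : ∃ t, (f.trans e') t = i := ⟨h2.choose, by
        simp [Function.Embedding.trans_apply, h2.choose_spec, hch]⟩
      rw [dif_pos h3]
      congr 1
      have : (f.trans e') h3.choose = i := h3.choose_spec
      have : e' (f h3.choose) = e' (f h2.choose) := by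
        simpa [Function.Embedding.trans_apply, h2.choose_spec, hch] using this
      exact f.injective (e'.injective this) |>.symm ▸ rfl
    · rw [dif_neg h2]
      have h3 : ¬ ∃ t, (f.trans e') t = i := by
        rintro ⟨t, ht⟩
        exact h2 ⟨t, e'.injective (by simpa [Function.Embedding.trans_apply, hch] using ht)⟩
      rw [dif_neg h3]
      unfold mergePt
      rw [dif_pos h1]
  · rw [dif_neg h1]
    have h3 : ¬ ∃ t, (f.trans e') t = i := by
      rintro ⟨t, ht⟩
      exact h1 ⟨f t, ht⟩
    rw [dif_neg h3]
    unfold mergePt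
    rw [dif_neg h1]
end comb
section comb2

/-- `(y, z) ↦ (mergePt e' y z, y ∘ e')` is a self-inverse bijection. -/
lemma merge_invol {n K a : ℕ} (e' : Fin a ↪ Fin K) (y : Fin K → Fin n) (z : Fin a → Fin n) :
    (mergePt e' (mergePt e' y z) (fun l => y (e' l)), fun l => mergePt e' y z (e' l))
      = (y, z) := by
  have h1 : ∀ l, mergePt e' y z (e' l) = z l := by
    intro l
    unfold mergePt
    rw [dif_pos ⟨l, rfl⟩]
    congr 1
    exact e'.injective (⟨l, rfl⟩ : ∃ t, e' t = e' l).choose_spec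
  refine Prod.ext ?_ (funext h1)
  funext i
  show mergePt e' (mergePt e' y z) (fun l => y (e' l)) i = y i
  by_cases h : ∃ l, e' l = i
  · unfold mergePt
    rw [dif_pos h]
    beta_reduce
    have hc : e' h.choose = i := h.choose_spec
    rw [hc]
  · unfold mergePt
    rw [dif_neg h, dif_neg h]

def mergeEquiv {n K a : ℕ} (e' : Fin a ↪ Fin K) :
    ((Fin K → Fin n) × (Fin a → Fin n)) ≃ ((Fin K → Fin n) × (Fin a → Fin n)) where
  toFun p := (mergePt e' p.1 p.2, fun l => p.1 (e' l))
  invFun p := (mergePt e' p.1 p.2, fun l => p.1 (e' l))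
  left_inv p := merge_invol e' p.1 p.2
  right_inv p := merge_invol e' p.1 p.2

end comb2
section comb3

/-- Embeddings of `Fin 1` are just points. -/
def embOne {α : Type*} : (Fin 1 ↪ α) ≃ α where
  toFun f := f 0
  invFun a := ⟨fun _ => a, fun x y _ => Subsingleton.elim x y⟩
  left_inv f := by
    apply Function.Embedding.ext
    intro t
    have : t = 0 := Subsingleton.elim _ _
    rw [this]
    rfl
  right_inv a := rfl

lemma trans_eq_embOne {K a : ℕ} (e' : Fin a ↪ Fin K) (f : Fin 1 ↪ Fin a) :
    f.trans e' = embOne.symm (e' (f 0)) := by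
  apply Function.Embedding.ext
  intro t
  have : t = 0 := Subsingleton.elim _ _
  rw [this]
  rfl

open Finset in
/-- The number of embeddings `Fin (K-1) ↪ Fin K` hitting a prescribed value at a
prescribed place is `(K-1)!`. -/
lemma card_emb_fiber {K a : ℕ} (hK : a + 1 = K) (l : Fin a) (i : Fin K) :
    (Finset.univ.filter (fun e' : Fin a ↪ Fin K => e' l = i)).card = a.factorial := by
  -- uniformity in i
  have huni : ∀ i j : Fin K,
      (Finset.univ.filter (fun e' : Fin a ↪ Fin K => e' l = i)).card =
      (Finset.univ.filter (fun e' : Fin a ↪ Fin K => e' l = j)).card := by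
    intro i j
    refine Finset.card_bij' (fun e' _ => e'.trans (Equiv.swap i j).toEmbedding)
      (fun e' _ => e'.trans (Equiv.swap i j).toEmbedding) ?_ ?_ ?_ ?_
    · intro e' he'
      simp only [Finset.mem_filter, Finset.mem_univ, true_and] at he' ⊢
      simp [he']
    · intro e' he'
      simp only [Finset.mem_filter, Finset.mem_univ, true_and] at he' ⊢
      simp [he', Equiv.swap_apply_right]
    · intro e' _
      apply Function.Embedding.ext
      intro t
      simp
    · intro e' _
      apply Function.Embedding.ext
      intro t
      simp
  have htot : ∑ i : Fin K, (Finset.univ.filter (fun e' : Fin a ↪ Fin K => e' l = i)).card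
      = Fintype.card (Fin a ↪ Fin K) := by
    rw [← Finset.card_univ]
    exact (Finset.card_eq_sum_card_fiberwise (fun e' _ => Finset.mem_univ (e' l))).symm
  have hconst : ∑ j : Fin K, (Finset.univ.filter (fun e' : Fin a ↪ Fin K => e' l = j)).card
      = K * (Finset.univ.filter (fun e' : Fin a ↪ Fin K => e' l = i)).card := by
    rw [Finset.sum_congr rfl (fun j _ => huni j i)]
    simp [Finset.sum_const, Finset.card_univ, mul_comm]
  have hcard : Fintype.card (Fin a ↪ Fin K) = K.factorial := by
    rw [Fintype.card_embedding_eq]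
    simp only [Fintype.card_fin]
    subst hK
    have h1 : (a+1).descFactorial (a+1) = ((a+1) - a) * (a+1).descFactorial a :=
      Nat.descFactorial_succ (a+1) a
    have h2 : (a+1) - a = 1 := by omega
    have h3 : (a+1).descFactorial (a+1) = (a+1).factorial := Nat.descFactorial_self (a+1)
    rw [h2, one_mul] at h1
    rw [← h1, h3]
  have hKeq : K * (Finset.univ.filter (fun e' : Fin a ↪ Fin K => e' l = i)).card
      = K * a.factorial := by
    rw [← hconst]
    rw [Finset.sum_congr rfl (fun j _ => huni j i), ← Finset.sum_congr rfl (fun j _ => huni j i)]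
    rw [htot, hcard]
    subst hK
    rw [Nat.factorial_succ]
  exact Nat.eq_of_mul_eq_mul_left (by omega) hKeq

end comb3
section keyid
variable {F : Type*} [Field F] {n : ℕ}

set_option maxHeartbeats 1000000 in
lemma sum_flatTestE_restrict (C : Set (Fin n → F)) {K a : ℕ} (hK : a + 1 = K)
    (ha : 0 < a) (hn : 0 < n) (x : (Fin K → Fin n) → F) :
    ∑ e' : Fin a ↪ Fin K, ∑ y : Fin K → Fin n, flatTestE C a 1 (flatRestrict x e' y)
      = (a.factorial : ℝ) * ∑ e : Fin 1 ↪ Fin K, ∑ w : Fin K → Fin n,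
          distTo (flatRestrict x e w) (tensorPow C 1) := by
  classical
  set G : (Fin 1 ↪ Fin K) → (Fin K → Fin n) → ℝ :=
    fun e w => distTo (flatRestrict x e w) (tensorPow C 1) with hG
  set H : (Fin 1 ↪ Fin K) → ℝ := fun e => ∑ w, G e w with hH
  set h' : Fin K → ℝ := fun i => H (embOne.symm i) with hh'
  set D : ℝ := (Fintype.card (Fin 1 ↪ Fin a) : ℝ) * (Fintype.card (Fin a → Fin n) : ℝ)
    with hD
  have hcard1 : Fintype.card (Fin 1 ↪ Fin a) = a := by
    rw [Fintype.card_embedding_eq]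
    simp [Nat.descFactorial]
  have hcard2 : Fintype.card (Fin a → Fin n) = n ^ a := by
    simp [Fintype.card_fun]
  -- pointwise rewriting of the inner expected value
  have hpt : ∀ (e' : Fin a ↪ Fin K) (y : Fin K → Fin n),
      flatTestE C a 1 (flatRestrict x e' y)
        = (∑ f : Fin 1 ↪ Fin a, ∑ z : Fin a → Fin n,
            G (f.trans e') (mergePt e' y z)) / D := by
    intro e' y
    have hnum : ∑ f : Fin 1 ↪ Fin a, ∑ z : Fin a → Fin n,
        distTo (flatRestrict (flatRestrict x e' y) f z) (tensorPow C 1)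
        = ∑ f : Fin 1 ↪ Fin a, ∑ z : Fin a → Fin n, G (f.trans e') (mergePt e' y z) := by
      apply Finset.sum_congr rfl
      intro f _
      apply Finset.sum_congr rfl
      intro z _
      simp only [hG]
      rw [flatRestrict_flatRestrict]
    show (∑ f : Fin 1 ↪ Fin a, ∑ z : Fin a → Fin n,
        distTo (flatRestrict (flatRestrict x e' y) f z) (tensorPow C 1)) /
        ((Fintype.card (Fin 1 ↪ Fin a) : ℝ) * (Fintype.card (Fin a → Fin n) : ℝ)) = _
    rw [hnum, ← hD]
  calc ∑ e' : Fin a ↪ Fin K, ∑ y : Fin K → Fin n, flatTestE C a 1 (flatRestrict x e' y)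
      = (∑ e' : Fin a ↪ Fin K, ∑ f : Fin 1 ↪ Fin a, ∑ y : Fin K → Fin n,
          ∑ z : Fin a → Fin n, G (f.trans e') (mergePt e' y z)) / D := by
        rw [Finset.sum_div]
        apply Finset.sum_congr rfl
        intro e' _
        rw [Finset.sum_congr rfl (fun y _ => hpt e' y), ← Finset.sum_div]
        rw [Finset.sum_comm]
    _ = (∑ e' : Fin a ↪ Fin K, ∑ f : Fin 1 ↪ Fin a,
          ((n:ℝ) ^ a) * H (f.trans e')) / D := by
        congr 1
        apply Finset.sum_congr rfl
        intro e' _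
        apply Finset.sum_congr rfl
        intro f _
        have := Equiv.sum_comp (mergeEquiv (n := n) e')
          (fun p : (Fin K → Fin n) × (Fin a → Fin n) => G (f.trans e') p.1)
        calc ∑ y : Fin K → Fin n, ∑ z : Fin a → Fin n, G (f.trans e') (mergePt e' y z)
            = ∑ p : (Fin K → Fin n) × (Fin a → Fin n),
                G (f.trans e') ((mergeEquiv (n := n) e') p).1 := by
              rw [Fintype.sum_prod_type]
              rfl
          _ = ∑ p : (Fin K → Fin n) × (Fin a → Fin n), G (f.trans e') p.1 := this
          _ = ((n:ℝ) ^ a) * H (f.trans e') := by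
              rw [Fintype.sum_prod_type_right]
              simp only [Finset.sum_const, Finset.card_univ, hcard2, nsmul_eq_mul]
              push_cast
              rfl
    _ = ((n:ℝ) ^ a * ∑ e' : Fin a ↪ Fin K, ∑ l : Fin a, h' (e' l)) / D := by
        congr 1
        rw [Finset.mul_sum]
        apply Finset.sum_congr rfl
        intro e' _
        rw [Finset.mul_sum]
        rw [← Equiv.sum_comp (embOne (α := Fin a)) (fun l => ((n:ℝ)^a) * h' (e' l))]
        apply Finset.sum_congr rfl
        intro f _
        congr 1
        rw [hh']
        congr 1
        rw [trans_eq_embOne]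
        rfl
    _ = ((n:ℝ) ^ a * ((a : ℝ) * (a.factorial : ℝ) * ∑ i : Fin K, h' i)) / D := by
        congr 2
        rw [Finset.sum_comm]
        have : ∀ l : Fin a, ∑ e' : Fin a ↪ Fin K, h' (e' l)
            = (a.factorial : ℝ) * ∑ i : Fin K, h' i := by
          intro l
          have hfib := Finset.sum_fiberwise_of_maps_to
            (s := (Finset.univ : Finset (Fin a ↪ Fin K)))
            (t := (Finset.univ : Finset (Fin K))) (g := fun e' => e' l)
            (fun e' _ => Finset.mem_univ _) (fun e' => h' (e' l))
          rw [← hfib]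
          rw [Finset.mul_sum]
          apply Finset.sum_congr rfl
          intro i _
          have : ∀ e' ∈ Finset.univ.filter (fun e' : Fin a ↪ Fin K => e' l = i),
              h' (e' l) = h' i := by
            intro e' he'
            simp only [Finset.mem_filter] at he'
            rw [he'.2]
          rw [Finset.sum_congr rfl this, Finset.sum_const, card_emb_fiber hK l i,
            nsmul_eq_mul]
        rw [Finset.sum_congr rfl (fun l _ => this l), Finset.sum_const, Finset.card_univ,
          Fintype.card_fin, nsmul_eq_mul]
        ring
    _ = (a.factorial : ℝ) * ∑ i : Fin K, h' i := by
        rw [hD, hcard1, hcard2]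
        have h1 : ((n:ℝ))^a ≠ 0 := by positivity
        have h2 : (a:ℝ) ≠ 0 := by positivity
        push_cast
        field_simp
    _ = (a.factorial : ℝ) * ∑ e : Fin 1 ↪ Fin K, ∑ w : Fin K → Fin n,
          distTo (flatRestrict x e w) (tensorPow C 1) := by
        congr 1
        rw [← Equiv.sum_comp (embOne (α := Fin K)).symm H]

end keyid
section compsec
variable {F : Type*} [Field F] {n : ℕ}

lemma card_emb_pred {K a : ℕ} (hK : a + 1 = K) :
    Fintype.card (Fin a ↪ Fin K) = K.factorial := by
  rw [Fintype.card_embedding_eq]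
  simp only [Fintype.card_fin]
  subst hK
  have h1 : (a+1).descFactorial (a+1) = ((a+1) - a) * (a+1).descFactorial a :=
    Nat.descFactorial_succ (a+1) a
  have h2 : (a+1) - a = 1 := by omega
  have h3 : (a+1).descFactorial (a+1) = (a+1).factorial := Nat.descFactorial_self (a+1)
  rw [h2, one_mul] at h1
  rw [← h1, h3]

lemma card_emb_one (K : ℕ) : Fintype.card (Fin 1 ↪ Fin K) = K := by
  rw [Fintype.card_embedding_eq]
  simp [Nat.descFactorial]

lemma flatRobust_comp {C : Set (Fin n → F)} {K a : ℕ} (hK : a + 1 = K) (ha : 1 ≤ a)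
    (hn : 0 < n)
    (hwK : ∃ x : (Fin K → Fin n) → F, 0 < distTo x (tensorPow C K))
    (hwa : ∃ x : (Fin a → Fin n) → F, 0 < distTo x (tensorPow C a)) :
    flatRobustConst C K a * flatRobustConst C a 1 ≤ flatRobustConst C K 1 := by
  classical
  apply le_flatRobustConst 1 hwK
  intro x
  set ρ'' := flatRobustConst C K a with hρ''
  set ρ' := flatRobustConst C a 1 with hρ'
  have hρ'0 : 0 ≤ ρ' := flatRobustConst_nonneg 1 hwa
  have h1 : ρ'' * distTo x (tensorPow C K) ≤ flatTestE C K a x :=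
    flatRobustConst_spec a hwK x
  have hDK : (Fintype.card (Fin a ↪ Fin K) : ℝ) * (Fintype.card (Fin K → Fin n) : ℝ)
      = (K.factorial : ℝ) * (n : ℝ) ^ K := by
    rw [card_emb_pred hK]
    simp [Fintype.card_fun]
  have hD1 : (Fintype.card (Fin 1 ↪ Fin K) : ℝ) * (Fintype.card (Fin K → Fin n) : ℝ)
      = (K : ℝ) * (n : ℝ) ^ K := by
    rw [card_emb_one K]
    simp [Fintype.card_fun]
  have step2 : ρ' * flatTestE C K a x ≤ flatTestE C K 1 x := by
    unfold flatTestE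
    rw [hDK, hD1]
    rw [mul_div_assoc']
    have hn' : (0:ℝ) < (n:ℝ) := by exact_mod_cast hn
    have hK' : (0:ℝ) < (K:ℝ) := by
      have : 0 < K := by omega
      exact_mod_cast this
    have hfac : (0:ℝ) < (K.factorial : ℝ) := by exact_mod_cast K.factorial_pos
    have hden : (0:ℝ) < (K.factorial : ℝ) * (n : ℝ) ^ K := by positivity
    rw [div_le_div_iff₀ hden (by positivity)]
    have hsum : ρ' * (∑ e' : Fin a ↪ Fin K, ∑ y : Fin K → Fin n,
        distTo (flatRestrict x e' y) (tensorPow C a))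
        ≤ ∑ e' : Fin a ↪ Fin K, ∑ y : Fin K → Fin n,
            flatTestE C a 1 (flatRestrict x e' y) := by
      rw [Finset.mul_sum]
      apply Finset.sum_le_sum
      intro e' _
      rw [Finset.mul_sum]
      apply Finset.sum_le_sum
      intro y _
      exact flatRobustConst_spec 1 hwa (flatRestrict x e' y)
    have hid := sum_flatTestE_restrict C hK ha hn x
    calc ρ' * (∑ e' : Fin a ↪ Fin K, ∑ y : Fin K → Fin n,
          distTo (flatRestrict x e' y) (tensorPow C a)) * ((K:ℝ) * (n:ℝ)^K)
        ≤ (∑ e' : Fin a ↪ Fin K, ∑ y : Fin K → Fin n,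
            flatTestE C a 1 (flatRestrict x e' y)) * ((K:ℝ) * (n:ℝ)^K) := by
          apply mul_le_mul_of_nonneg_right hsum (by positivity)
      _ = ((a.factorial : ℝ) * ∑ e : Fin 1 ↪ Fin K, ∑ w : Fin K → Fin n,
            distTo (flatRestrict x e w) (tensorPow C 1)) * ((K:ℝ) * (n:ℝ)^K) := by
          rw [hid]
      _ = (∑ e : Fin 1 ↪ Fin K, ∑ w : Fin K → Fin n,
            distTo (flatRestrict x e w) (tensorPow C 1)) * ((K.factorial : ℝ) * (n:ℝ)^K) := by
          have hfact : (K.factorial : ℝ) = (K : ℝ) * (a.factorial : ℝ) := by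
            subst hK
            rw [Nat.factorial_succ]
            push_cast
            ring
          rw [hfact]
          ring
  calc ρ'' * ρ' * distTo x (tensorPow C K)
      = ρ' * (ρ'' * distTo x (tensorPow C K)) := by ring
    _ ≤ ρ' * flatTestE C K a x := mul_le_mul_of_nonneg_left h1 hρ'0
    _ ≤ flatTestE C K 1 x := step2

end compsec
section chain
variable {F : Type*} [Field F] {n : ℕ}

lemma robust_chain {C : Set (Fin n → F)} (hn : 0 < n)
    (hwit : ∀ k, 1 ≤ k → ∃ x : (Fin k → Fin n) → F, 0 < distTo x (tensorPow C k))
    {m : ℕ} (hm : 2 ≤ m) :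
    flatRobustConst C 2 1 * ∏ k ∈ Finset.Icc 3 m, flatRobustConst C k (k-1)
      ≤ flatRobustConst C m 1 := by
  induction m, hm using Nat.le_induction with
  | base =>
      rw [show Finset.Icc 3 2 = ∅ by rfl]
      simp
  | succ M hM ih =>
      have hprod : ∏ k ∈ Finset.Icc 3 (M+1), flatRobustConst C k (k-1)
          = (∏ k ∈ Finset.Icc 3 M, flatRobustConst C k (k-1))
            * flatRobustConst C (M+1) M := by
        rw [Finset.prod_Icc_succ_top (by omega), Nat.add_sub_cancel]
      rw [hprod, ← mul_assoc]
      calc flatRobustConst C 2 1 * (∏ k ∈ Finset.Icc 3 M, flatRobustConst C k (k-1))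
            * flatRobustConst C (M+1) M
          ≤ flatRobustConst C M 1 * flatRobustConst C (M+1) M := by
            apply mul_le_mul_of_nonneg_right ih
            exact flatRobustConst_nonneg M (hwit (M+1) (by omega))
        _ = flatRobustConst C (M+1) M * flatRobustConst C M 1 := by ring
        _ ≤ flatRobustConst C (M+1) 1 :=
            flatRobust_comp rfl (by omega) hn (hwit (M+1) (by omega)) (hwit M (by omega))

lemma sum_Icc_eq (m : ℕ) (hm : 2 ≤ m) :
    ∑ k ∈ Finset.Icc 3 m, k = (m - 2) * (m + 3) / 2 := by
  obtain ⟨j, rfl⟩ : ∃ j, m = j + 2 := ⟨m - 2, by omega⟩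
  have key : ∀ j : ℕ, 2 * ∑ k ∈ Finset.Icc 3 (j+2), k = j * (j + 5) := by
    intro j
    induction j with
    | zero => rfl
    | succ i ihj =>
        rw [show i + 1 + 2 = (i + 2) + 1 by omega, Finset.sum_Icc_succ_top (by omega)]
        have : i * (i + 5) + 2 * (i + 2 + 1) = (i+1) * (i + 1 + 5) := by ring
        omega
    
  have h2 := key j
  have hsub : j + 2 - 2 = j := by omega
  rw [hsub, show j + 2 + 3 = j + 5 from by omega]
  omega

end chain
section rhobounds

lemma prodExpConst_nonneg {F : Type*} [Field F] {m : ℕ} {nn : Fin m → ℕ}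
    (C : ∀ i, Set (Fin (nn i) → F)) : 0 ≤ prodExpConst C := by
  unfold prodExpConst
  by_cases hP : {ρ : ℝ | productExpanding C ρ}.Nonempty
  · by_cases hb : BddAbove {ρ : ℝ | productExpanding C ρ}
    · apply le_csSup hb
      obtain ⟨ρ₀, hρ₀⟩ := hP
      intro c hc
      obtain ⟨a, ha, hsum, _⟩ := hρ₀ c hc
      exact ⟨a, ha, hsum, by rw [zero_mul]; exact normWt_nonneg c⟩
    · rw [Real.sSup_of_not_bddAbove hb]
  · rw [Set.not_nonempty_iff_eq_empty] at hP
    rw [hP, Real.sSup_empty]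

lemma minDist_le_one {ι F : Type*} [Fintype ι] [Zero F] (S : Set (ι → F)) :
    minDist S ≤ 1 := by
  unfold minDist
  by_cases hS : (S \ {0}).Nonempty
  · obtain ⟨c, hc⟩ := hS
    calc sInf (normWt '' (S \ {0})) ≤ normWt c := by
          apply csInf_le ⟨0, ?_⟩ (Set.mem_image_of_mem _ hc)
          rintro v ⟨d, _, rfl⟩
          exact normWt_nonneg d
      _ ≤ 1 := normWt_le_one c
  · rw [Set.not_nonempty_iff_eq_empty] at hS
    rw [hS]
    simp [Real.sInf_empty]

end rhobounds

/-- product expansion implies robustness of the line test: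
`ρ_r(T_m^1, C^{⊗m}) ≥ ρ^{(m−2)(m+3)/2+1}/(4·12^{m−2})` with `ρ = ρ(C,…,C)`. -/
theorem stmt_15 {F : Type*} [Field F] [Fintype F] {n : ℕ} (C : Submodule F (Fin n → F))
    (hC : C ≠ ⊤) (m : ℕ) (hm : 2 ≤ m) (ρ : ℝ)
    (hρ : ρ = prodExpConst (n := fun _ : Fin m => n) (fun _ => (C : Set (Fin n → F))))
    (ha1 : ρ ≤ prodExpConst (n := fun _ : Fin 2 => n) (fun _ => (C : Set (Fin n → F))))
    (ha2 : ρ ≤ minDist (C : Set (Fin n → F)))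
    (hb : prodExpConst (n := fun _ : Fin 2 => n) (fun _ => (C : Set (Fin n → F))) ≤
      agreeConst (n := fun _ : Fin 2 => n) (fun _ => (C : Set (Fin n → F))))
    (hc : agreeConst (n := fun _ : Fin 2 => n) (fun _ => (C : Set (Fin n → F))) /
        (2 * (1 + agreeConst (n := fun _ : Fin 2 => n) (fun _ => (C : Set (Fin n → F))))) ≤
      flatRobustConst (C : Set (Fin n → F)) 2 1)
    (hd : ∀ k, 3 ≤ k → k ≤ m →
      (1 / 12 : ℝ) * minDist (C : Set (Fin n → F)) ^ k ≤
        flatRobustConst (C : Set (Fin n → F)) k (k - 1)) :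
    (1 / (4 * 12 ^ (m - 2) : ℝ)) * ρ ^ ((m - 2) * (m + 3) / 2 + 1) ≤
      flatRobustConst (C : Set (Fin n → F)) m 1 := by
  classical
  -- basic facts
  have hn : 0 < n := by
    rcases Nat.eq_zero_or_pos n with h | h
    · exfalso
      apply hC
      ext x
      subst h
      simp only [Submodule.mem_top, iff_true]
      have hx : x = 0 := funext (fun i => Fin.elim0 i)
      rw [hx]
      exact C.zero_mem
    · exact h
  have hwex : ∃ w : Fin n → F, w ∉ (C : Set (Fin n → F)) := by
    by_contra h
    push_neg at h
    exact hC (Submodule.eq_top_iff'.2 h)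
  obtain ⟨w, hw⟩ := hwex
  have h0 : (0 : Fin n → F) ∈ (C : Set (Fin n → F)) := C.zero_mem
  have hwit : ∀ k, 1 ≤ k →
      ∃ x : (Fin k → Fin n) → F, 0 < distTo x (tensorPow (C : Set (Fin n → F)) k) :=
    fun k hk => exists_distTo_pos h0 hw hn hk
  have hρ0 : 0 ≤ ρ := by
    rw [hρ]
    exact prodExpConst_nonneg _
  have hρ1 : ρ ≤ 1 := ha2.trans (minDist_le_one _)
  set ρa := agreeConst (n := fun _ : Fin 2 => n) (fun _ => (C : Set (Fin n → F))) with hρa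
  have hρρa : ρ ≤ ρa := ha1.trans hb
  -- lower bound for the 2-dimensional robustness
  have h21 : ρ / 4 ≤ flatRobustConst (C : Set (Fin n → F)) 2 1 := by
    refine le_trans ?_ hc
    have hpos : (0:ℝ) < 2 * (1 + ρa) := by nlinarith
    rw [div_le_div_iff₀ (by norm_num) hpos]
    nlinarith
  -- lower bounds for the hyperplane tests
  have hprodlb : ∏ k ∈ Finset.Icc 3 m, ((1/12 : ℝ) * ρ ^ k)
      ≤ ∏ k ∈ Finset.Icc 3 m, flatRobustConst (C : Set (Fin n → F)) k (k-1) := by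
    apply Finset.prod_le_prod
    · intro k _
      positivity
    · intro k hk
      simp only [Finset.mem_Icc] at hk
      refine le_trans ?_ (hd k hk.1 hk.2)
      have : ρ ^ k ≤ minDist (C : Set (Fin n → F)) ^ k := pow_le_pow_left₀ hρ0 ha2 k
      nlinarith
  -- combine
  have hmain : (ρ/4) * ∏ k ∈ Finset.Icc 3 m, ((1/12 : ℝ) * ρ ^ k)
      ≤ flatRobustConst (C : Set (Fin n → F)) m 1 := by
    calc (ρ/4) * ∏ k ∈ Finset.Icc 3 m, ((1/12 : ℝ) * ρ ^ k)
        ≤ flatRobustConst (C : Set (Fin n → F)) 2 1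
            * ∏ k ∈ Finset.Icc 3 m, flatRobustConst (C : Set (Fin n → F)) k (k-1) := by
          apply mul_le_mul h21 hprodlb
          · apply Finset.prod_nonneg
            intro k _
            positivity
          · exact flatRobustConst_nonneg 1 (hwit 2 (by omega))
      _ ≤ flatRobustConst (C : Set (Fin n → F)) m 1 := robust_chain hn hwit hm
  refine le_trans (le_of_eq ?_) hmain
  -- algebraic identification of the constant
  have hsum := sum_Icc_eq m hm
  have hcard : (Finset.Icc 3 m).card = m - 2 := by
    rw [Nat.card_Icc]
    omega
  rw [Finset.prod_mul_distrib, Finset.prod_const, Finset.prod_pow_eq_pow_sum, hsum, hcard]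
  rw [pow_succ]
  have h12 : ((1:ℝ)/12) ^ (m-2) = 1 / 12 ^ (m-2) := by
    rw [one_div, one_div, inv_pow]
  rw [h12]
  have hne : (12:ℝ) ^ (m-2) ≠ 0 := by positivity
  field_simp

end
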